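/- Let G be a connected simple graph on n vertices. For each pair u,v, let 𝒫_{uv} be the set of all shortest paths from u to v and assign nonnegative weights α_{uv}^{(q)} summing to 1 over q. Define for each edge k the extended score C_k(α) = (1/2) Σ_u Σ_v |P_{uv}| Σ_q φ_{uv}^{(q)}(k) α_{uv}^{(q)}. Then λ₂ ≥ n / C_max(α), where C_max(α) is the maximum of C_k(α) over edges. -/

import Mathlib

open SimpleGraph Finset
open Matrix

/-- The algebraic connectivity: the second smallest eigenvalue of the Laplacian matrix. -/
noncomputable def algebraicConnectivity {n : ℕ} (G : SimpleGraph (Fin n))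
    [DecidableRel G.Adj] : ℝ :=
  if h : 1 < n then
    (((G.posSemidef_lapMatrix ℝ).1.eigenvalues) ∘
      (Tuple.sort ((G.posSemidef_lapMatrix ℝ).1.eigenvalues))) ⟨1, h⟩
  else 0

/-- A fixed system of shortest paths, one for each (ordered) pair of vertices. -/
structure ShortestPathSystem {n : ℕ} (G : SimpleGraph (Fin n)) where
  path : ∀ u v : Fin n, G.Walk u v
  isPath : ∀ u v : Fin n, (path u v).IsPath
  length_eq : ∀ u v : Fin n, (path u v).length = G.dist u v

/-- The connection-graph-stability score of an edge `e`: half the double sum over ordered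
pairs of vertices of the length of the chosen shortest path, if it passes through `e`. -/
noncomputable def cgsScore {n : ℕ} {G : SimpleGraph (Fin n)} (P : ShortestPathSystem G)
    (e : Sym2 (Fin n)) : ℝ :=
  (1/2) * ∑ u : Fin n, ∑ v : Fin n,
    (if e ∈ (P.path u v).edges then ((P.path u v).length : ℝ) else 0)

/-- The squared difference of `x` across an edge. -/
noncomputable def edgeSq {V : Type*} (x : V → ℝ) : Sym2 V → ℝ :=
  Sym2.lift ⟨fun a b => (x a - x b)^2, fun a b => by ring_nf⟩

/-- A path weighting strategy: for each pair of vertices, the finite set of *all* shortest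
paths between them, together with nonnegative weights summing to `1`. -/
structure PathWeighting {n : ℕ} (G : SimpleGraph (Fin n)) where
  paths : ∀ u v : Fin n, Finset (G.Walk u v)
  mem_iff : ∀ (u v : Fin n) (p : G.Walk u v),
    p ∈ paths u v ↔ (p.IsPath ∧ p.length = G.dist u v)
  weight : ∀ u v : Fin n, G.Walk u v → ℝ
  weight_nonneg : ∀ (u v : Fin n) (p : G.Walk u v), 0 ≤ weight u v p
  weight_sum : ∀ u v : Fin n, u ≠ v → ∑ p ∈ paths u v, weight u v p = 1

/-- The extended connection-graph-stability score of an edge `e` under a path weighting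
strategy: half the double sum over ordered pairs of the shortest-path length times the
total weight of the shortest paths through `e`. -/
noncomputable def extScore {n : ℕ} {G : SimpleGraph (Fin n)} (W : PathWeighting G)
    (e : Sym2 (Fin n)) : ℝ :=
  (1/2) * ∑ u : Fin n, ∑ v : Fin n, (G.dist u v : ℝ) *
    ∑ p ∈ W.paths u v, (if e ∈ p.edges then W.weight u v p else 0)

lemma edgeSq_nonneg {V : Type*} (x : V → ℝ) (e : Sym2 V) : 0 ≤ edgeSq x e := by
  induction e using Sym2.ind with
  | _ a b => exact sq_nonneg _

lemma edgeSq_mk {V : Type*} (x : V → ℝ) (a b : V) : edgeSq x s(a,b) = (x a - x b)^2 := rfl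

/-- Cauchy–Schwarz along a walk. -/
lemma walk_sq_le {n : ℕ} {G : SimpleGraph (Fin n)} (x : Fin n → ℝ) :
    ∀ {u v : Fin n} (p : G.Walk u v),
      (x u - x v)^2 ≤ (p.length : ℝ) * (p.edges.map (edgeSq x)).sum := by
  intro u v p
  induction p with
  | nil => simp
  | @cons u w v h p ih =>
    have hS : 0 ≤ (p.edges.map (edgeSq x)).sum := by
      apply List.sum_nonneg
      intro a ha
      simp only [List.mem_map] at ha
      obtain ⟨e, _, rfl⟩ := ha
      exact edgeSq_nonneg x e
    simp only [SimpleGraph.Walk.edges_cons, SimpleGraph.Walk.length_cons, List.map_cons,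
      List.sum_cons, edgeSq_mk]
    push_cast
    rcases Nat.eq_zero_or_pos p.length with h0 | hpos
    · rw [h0] at ih ⊢
      push_cast at ih
      have hb : x w - x v = 0 := by
        have h2 : (x w - x v)^2 = 0 := le_antisymm (by linarith) (sq_nonneg _)
        exact pow_eq_zero_iff (by norm_num) |>.1 h2
      have : x u - x v = x u - x w := by linarith
      rw [this]
      push_cast
      nlinarith [hS]
    · have hL : (0:ℝ) < (p.length : ℝ) := by exact_mod_cast hpos
      nlinarith [ih, hS, sq_nonneg ((p.length : ℝ) * (x u - x w) - (x w - x v)),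
        mul_le_mul_of_nonneg_left ih hL.le]

/-- Summing a symmetric edge function over ordered adjacent pairs counts each edge twice. -/
lemma sum_darts_eq {n : ℕ} (G : SimpleGraph (Fin n)) [DecidableRel G.Adj]
    (f : Sym2 (Fin n) → ℝ) :
    ∑ u : Fin n, ∑ v : Fin n, (if G.Adj u v then f s(u,v) else 0)
      = 2 * ∑ e ∈ G.edgeFinset, f e := by
  classical
  have h1 : ∑ u : Fin n, ∑ v : Fin n, (if G.Adj u v then f s(u,v) else 0)
      = ∑ p ∈ (univ ×ˢ univ).filter (fun p : Fin n × Fin n => G.Adj p.1 p.2), f s(p.1, p.2) := by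
    rw [Finset.sum_filter, Finset.sum_product]
  have h2 : ∑ p ∈ (univ ×ˢ univ).filter (fun p : Fin n × Fin n => G.Adj p.1 p.2), f s(p.1, p.2)
      = ∑ d : G.Dart, f d.edge := by
    refine Finset.sum_bij' (fun p hp => (⟨p, (Finset.mem_filter.1 hp).2⟩ : G.Dart))
      (fun d _ => (d.fst, d.snd)) ?_ ?_ ?_ ?_ ?_ <;> simp [SimpleGraph.Dart.edge, Dart.adj]
  have h3 : ∑ d : G.Dart, f d.edge = ∑ e ∈ G.edgeFinset, 2 * f e := by
    rw [← Finset.sum_fiberwise_of_maps_to (g := Dart.edge) (t := G.edgeFinset)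
      (fun d _ => by rw [mem_edgeFinset]; exact d.edge_mem)]
    refine Finset.sum_congr rfl fun e he => ?_
    have hcard := G.dart_edge_fiber_card e (mem_edgeFinset.1 he)
    calc ∑ d ∈ Finset.univ.filter (fun d : G.Dart => d.edge = e), f d.edge
        = ∑ _d ∈ Finset.univ.filter (fun d : G.Dart => d.edge = e), f e := by
          refine Finset.sum_congr rfl fun d hd => ?_
          rw [(Finset.mem_filter.1 hd).2]
      _ = 2 * f e := by rw [Finset.sum_const, hcard]; simp [mul_comm]
  rw [h1, h2, h3, Finset.mul_sum]

/-- The extended connection-graph-stability lower bound: for any path weighting strategy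
`α`, `λ₂ ≥ n / C_max(α)`. -/
theorem algebraicConnectivity_ge_div_extScore_max {n : ℕ} (G : SimpleGraph (Fin n))
    [DecidableRel G.Adj] (hG : G.Connected) (hn : 2 ≤ n)
    (W : PathWeighting G) (Cmax : ℝ)
    (hC : IsGreatest (extScore W '' G.edgeSet) Cmax) :
    (n : ℝ) / Cmax ≤ algebraicConnectivity G := by
  classical
  have h1 : 1 < n := hn
  set hA := (G.posSemidef_lapMatrix ℝ).1 with hAdef
  set σ := Tuple.sort hA.eigenvalues with hσ
  set i₁ := σ ⟨1, h1⟩ with hi₁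
  set lam := hA.eigenvalues i₁ with hlamdef
  set x : Fin n → ℝ := ⇑(hA.eigenvectorBasis i₁) with hx
  have hx_eig : G.lapMatrix ℝ *ᵥ x = lam • x := hA.mulVec_eigenvectorBasis i₁
  -- sum of squares is 1
  have hsum2 : ∑ i, x i ^ 2 = 1 := by
    have hnorm : ‖hA.eigenvectorBasis i₁‖ = 1 := hA.eigenvectorBasis.orthonormal.1 i₁
    have h := EuclideanSpace.norm_eq (hA.eigenvectorBasis i₁)
    rw [hnorm] at h
    have h2 : ∑ i, ‖x i‖ ^ 2 = 1 := by
      have := Real.sqrt_eq_one.1 h.symm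
      simpa using this
    simpa [Real.norm_eq_abs, sq_abs] using h2
  -- eigenvalue nonneg
  have hlam_nonneg : 0 ≤ lam := (G.posSemidef_lapMatrix ℝ).eigenvalues_nonneg i₁
  -- lam positive
  have hlam_pos : 0 < lam := by
    rcases eq_or_lt_of_le hlam_nonneg with h0 | h; swap
    · exact h
    exfalso
    set i₀ := σ ⟨0, by omega⟩ with hi₀
    have hmono := Tuple.monotone_sort hA.eigenvalues
    have hle : (hA.eigenvalues ∘ σ) ⟨0, by omega⟩ ≤ (hA.eigenvalues ∘ σ) ⟨1, h1⟩ :=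
      hmono (by simp [Fin.mk_le_mk])
    have h00 : hA.eigenvalues i₀ = 0 :=
      le_antisymm (by simpa [hσ] using hle.trans_eq h0.symm)
        ((G.posSemidef_lapMatrix ℝ).eigenvalues_nonneg i₀)
    have hne : i₀ ≠ i₁ := by
      intro hcontra
      have := σ.injective hcontra
      simp [Fin.ext_iff] at this
    -- both eigenvectors are constant
    have hconst : ∀ (i : Fin n), hA.eigenvalues i = 0 →
        ∀ j k, hA.eigenvectorBasis i j = hA.eigenvectorBasis i k := by
      intro i hi j k
      have hm := hA.mulVec_eigenvectorBasis i
      rw [hi, zero_smul] at hm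
      have hzero : Matrix.toLin' (G.lapMatrix ℝ) (⇑(hA.eigenvectorBasis i)) = 0 := by
        rw [Matrix.toLin'_apply]; exact hm
      exact (G.lapMatrix_mulVec_eq_zero_iff_forall_reachable).1 hm j k
        (hG.preconnected j k)
    have hinner : ∀ i j : Fin n,
        (inner ℝ (hA.eigenvectorBasis i) (hA.eigenvectorBasis j) : ℝ)
          = ∑ k, hA.eigenvectorBasis i k * hA.eigenvectorBasis j k := by
      intro i j
      simp [PiLp.inner_apply, RCLike.inner_apply, conj_trivial, mul_comm]
    have horth : (inner ℝ (hA.eigenvectorBasis i₀) (hA.eigenvectorBasis i₁) : ℝ) = 0 :=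
      hA.eigenvectorBasis.orthonormal.2 hne
    have hnorm0 : (inner ℝ (hA.eigenvectorBasis i₀) (hA.eigenvectorBasis i₀) : ℝ) = 1 := by
      rw [real_inner_self_eq_norm_sq, hA.eigenvectorBasis.orthonormal.1 i₀]; norm_num
    have hnorm1 : (inner ℝ (hA.eigenvectorBasis i₁) (hA.eigenvectorBasis i₁) : ℝ) = 1 := by
      rw [real_inner_self_eq_norm_sq, hA.eigenvectorBasis.orthonormal.1 i₁]; norm_num
    set z : Fin n := ⟨0, by omega⟩
    have hc0 : ∀ k, hA.eigenvectorBasis i₀ k = hA.eigenvectorBasis i₀ z :=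
      fun k => hconst i₀ h00 k z
    have hc1 : ∀ k, hA.eigenvectorBasis i₁ k = hA.eigenvectorBasis i₁ z :=
      fun k => hconst i₁ (by rw [← hlamdef, ← h0]) k z
    rw [hinner] at horth hnorm0 hnorm1
    rw [Finset.sum_congr rfl (fun k _ => by rw [hc0 k, hc1 k])] at horth
    rw [Finset.sum_congr rfl (fun k _ => by rw [hc0 k])] at hnorm0
    rw [Finset.sum_congr rfl (fun k _ => by rw [hc1 k])] at hnorm1
    simp only [Finset.sum_const, Finset.card_univ, Fintype.card_fin, nsmul_eq_mul]
      at horth hnorm0 hnorm1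
    have hn0 : (n : ℝ) > 0 := by positivity
    nlinarith [horth, hnorm0, hnorm1]
  -- sum of entries is 0
  have hcol : ∀ u : Fin n, ∑ v, G.lapMatrix ℝ v u = 0 := by
    intro u
    have h := congrFun (G.lapMatrix_mulVec_const_eq_zero (R := ℝ)) u
    simp only [Matrix.mulVec, dotProduct, mul_one, Pi.zero_apply] at h
    calc ∑ v, G.lapMatrix ℝ v u = ∑ v, G.lapMatrix ℝ u v :=
          Finset.sum_congr rfl fun v _ => (G.isSymm_lapMatrix (R := ℝ)).apply u v
      _ = 0 := h
  have hsum0 : ∑ i, x i = 0 := by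
    have h := congrArg (fun y : Fin n → ℝ => ∑ v, y v) hx_eig
    simp only [Matrix.mulVec, dotProduct, Pi.smul_apply, smul_eq_mul] at h
    rw [Finset.sum_comm] at h
    have hL : ∑ u : Fin n, ∑ v : Fin n, G.lapMatrix ℝ v u * x u = 0 := by
      refine Finset.sum_eq_zero fun u _ => ?_
      rw [← Finset.sum_mul, hcol u, zero_mul]
    rw [hL] at h
    rw [← Finset.mul_sum] at h
    exact (mul_eq_zero.1 h.symm).resolve_left hlam_pos.ne'
  -- quadratic form equals lam
  have hdot : x ⬝ᵥ (G.lapMatrix ℝ *ᵥ x) = lam := by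
    rw [hx_eig]
    simp only [dotProduct, Pi.smul_apply, smul_eq_mul]
    calc ∑ i, x i * (lam * x i) = lam * ∑ i, x i ^ 2 := by
          rw [Finset.mul_sum]; exact Finset.sum_congr rfl fun i _ => by ring
      _ = lam := by rw [hsum2, mul_one]
  have hform := G.lapMatrix_toLinearMap₂' (R := ℝ) x
  rw [Matrix.toLinearMap₂'_apply'] at hform
  have hq_edge : ∑ e ∈ G.edgeFinset, edgeSq x e = lam := by
    have h2 := sum_darts_eq G (edgeSq x)
    simp only [edgeSq_mk] at h2
    rw [h2] at hform
    rw [hdot] at hform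
    linarith
  -- Step A : double sum of squared differences
  have hA2 : ∑ u : Fin n, ∑ v : Fin n, (x u - x v)^2 = 2 * n := by
    have inner_eq : ∀ u : Fin n, ∑ v : Fin n, (x u - x v)^2 = n * x u ^ 2 + 1 := by
      intro u
      have hterm : ∀ v : Fin n, (x u - x v)^2 = x u ^2 + x v^2 - 2 * x u * x v :=
        fun v => by ring
      simp_rw [hterm]
      rw [Finset.sum_sub_distrib, Finset.sum_add_distrib, Finset.sum_const, hsum2]
      have : ∑ v : Fin n, 2 * x u * x v = 2 * x u * ∑ v, x v := by rw [Finset.mul_sum]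
      rw [this, hsum0]
      simp [Finset.card_univ, nsmul_eq_mul]
    simp_rw [inner_eq]
    rw [Finset.sum_add_distrib, Finset.sum_const, ← Finset.mul_sum, hsum2]
    simp [Finset.card_univ, nsmul_eq_mul]
    ring
  -- Step B : per-pair Cauchy–Schwarz over weighted shortest paths
  have hpair : ∀ u v : Fin n, (x u - x v)^2 ≤
      ∑ p ∈ W.paths u v, W.weight u v p *
        ((G.dist u v : ℝ) * ∑ e ∈ p.edges.toFinset, edgeSq x e) := by
    intro u v
    by_cases huv : u = v
    · subst huv
      simp only [SimpleGraph.dist_self, Nat.cast_zero, zero_mul, mul_zero, Finset.sum_const_zero]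
      simp
    · have hw := W.weight_sum u v huv
      calc (x u - x v)^2 = ∑ p ∈ W.paths u v, W.weight u v p * (x u - x v)^2 := by
            rw [← Finset.sum_mul, hw, one_mul]
        _ ≤ _ := by
            refine Finset.sum_le_sum fun p hp => ?_
            obtain ⟨hpath, hlen⟩ := (W.mem_iff u v p).1 hp
            have hcs := walk_sq_le x p
            have hnodup : p.edges.Nodup := hpath.isTrail.edges_nodup
            have hsumeq : ∑ e ∈ p.edges.toFinset, edgeSq x e = (p.edges.map (edgeSq x)).sum :=
              List.sum_toFinset _ hnodup
            rw [hsumeq, ← hlen]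
            exact mul_le_mul_of_nonneg_left hcs (W.weight_nonneg u v p)
  -- Step C : rewriting the total as a sum over edges
  have hfil : ∀ (u v : Fin n) (p : G.Walk u v), ∑ e ∈ p.edges.toFinset, edgeSq x e
      = ∑ e ∈ G.edgeFinset, if e ∈ p.edges then edgeSq x e else 0 := by
    intro u v p
    rw [← Finset.sum_filter]
    refine (Finset.sum_congr ?_ fun _ _ => rfl).symm
    ext e
    simp only [Finset.mem_filter, mem_edgeFinset, List.mem_toFinset]
    exact ⟨fun h => h.2, fun h => ⟨p.edges_subset_edgeSet h, h⟩⟩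
  have hT : ∑ u : Fin n, ∑ v : Fin n, ∑ p ∈ W.paths u v, W.weight u v p *
        ((G.dist u v : ℝ) * ∑ e ∈ p.edges.toFinset, edgeSq x e)
      = ∑ e ∈ G.edgeFinset, (2 * extScore W e) * edgeSq x e := by
    have hR : ∀ e : Sym2 (Fin n), (2 * extScore W e) * edgeSq x e
        = ∑ u : Fin n, ∑ v : Fin n, ∑ p ∈ W.paths u v,
            (G.dist u v : ℝ) * (if e ∈ p.edges then W.weight u v p else 0) * edgeSq x e := by
      intro e
      rw [extScore]
      rw [show (2 : ℝ) * ((1/2) * ∑ u : Fin n, ∑ v : Fin n, (G.dist u v : ℝ) *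
          ∑ p ∈ W.paths u v, (if e ∈ p.edges then W.weight u v p else 0))
        = ∑ u : Fin n, ∑ v : Fin n, (G.dist u v : ℝ) *
          ∑ p ∈ W.paths u v, (if e ∈ p.edges then W.weight u v p else 0) by ring]
      rw [Finset.sum_mul]
      refine Finset.sum_congr rfl fun u _ => ?_
      rw [Finset.sum_mul]
      refine Finset.sum_congr rfl fun v _ => ?_
      rw [Finset.mul_sum, Finset.sum_mul]
    simp_rw [hR]
    symm
    rw [Finset.sum_comm]
    refine Finset.sum_congr rfl fun u _ => ?_
    rw [Finset.sum_comm]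
    refine Finset.sum_congr rfl fun v _ => ?_
    rw [Finset.sum_comm]
    refine Finset.sum_congr rfl fun p _ => ?_
    rw [hfil u v p, Finset.mul_sum, Finset.mul_sum]
    refine Finset.sum_congr rfl fun e _ => ?_
    split_ifs <;> ring
  -- Step D : bound by Cmax
  have hD : ∑ e ∈ G.edgeFinset, (2 * extScore W e) * edgeSq x e
      ≤ 2 * Cmax * lam := by
    calc ∑ e ∈ G.edgeFinset, (2 * extScore W e) * edgeSq x e
        ≤ ∑ e ∈ G.edgeFinset, (2 * Cmax) * edgeSq x e := by
          refine Finset.sum_le_sum fun e he => ?_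
          have hle : extScore W e ≤ Cmax :=
            hC.2 (Set.mem_image_of_mem _ (mem_edgeFinset.1 he))
          exact mul_le_mul_of_nonneg_right (by linarith) (edgeSq_nonneg x e)
      _ = 2 * Cmax * lam := by rw [← Finset.mul_sum, hq_edge]
  -- combine
  have hmain : 2 * (n : ℝ) ≤ 2 * Cmax * lam := by
    calc 2 * (n : ℝ) = ∑ u : Fin n, ∑ v : Fin n, (x u - x v)^2 := hA2.symm
      _ ≤ ∑ u : Fin n, ∑ v : Fin n, ∑ p ∈ W.paths u v, W.weight u v p *
            ((G.dist u v : ℝ) * ∑ e ∈ p.edges.toFinset, edgeSq x e) :=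
          Finset.sum_le_sum fun u _ => Finset.sum_le_sum fun v _ => hpair u v
      _ = ∑ e ∈ G.edgeFinset, (2 * extScore W e) * edgeSq x e := hT
      _ ≤ 2 * Cmax * lam := hD
  have hCpos : 0 < Cmax := by
    rcases hC.1 with ⟨e, _, rfl⟩
    by_contra hle
    push_neg at hle
    have : (n : ℝ) ≤ extScore W e * lam := by linarith
    have hneg : extScore W e * lam ≤ 0 := mul_nonpos_of_nonpos_of_nonneg hle hlam_nonneg
    have : (n : ℝ) ≤ 0 := le_trans this hneg
    have : (0 : ℝ) < n := by positivity
    linarith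
  have halg : algebraicConnectivity G = lam := by
    rw [algebraicConnectivity, dif_pos h1]
    rfl
  rw [halg, div_le_iff₀ hCpos]
  nlinarith [hmain]
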